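/- Let B be a commutative K-algebra over a field K of characteristic zero and ∂ a locally nilpotent K-derivation on B. Then Ker(∂) is integrally closed in B whenever B is a domain; in particular, if b ∈ B and b^n ∈ Ker(∂) for some n ≥ 1, then b ∈ Ker(∂). -/

import Mathlib

/-- The kernel of a derivation, as a subring of `B`. -/
def Derivation.kerSubring {K B : Type*} [CommRing K] [CommRing B] [Algebra K B]
    (D : Derivation K B B) : Subring B where
  carrier := {b | D b = 0}
  zero_mem' := by simp
  one_mem' := by simp
  add_mem' {a b} ha hb := by simp_all
  neg_mem' {a} ha := by simp_all
  mul_mem' {a b} ha hb := by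
    simp only [Set.mem_setOf_eq, Derivation.leibniz, smul_eq_mul] at *
    rw [ha, hb]; ring

/-- For a locally nilpotent `K`-derivation `D` on a domain `B` over a field `K`
of characteristic zero, `Ker D` is integrally closed in `B`; in particular, if `b ^ n ∈ Ker D`
for some `n ≥ 1`, then `b ∈ Ker D`. -/
theorem lnd_kernel_integrally_closed {K B : Type*} [Field K] [CharZero K] [CommRing B]
    [IsDomain B] [Algebra K B]
    (D : Derivation K B B) (hLN : ∀ b : B, ∃ n : ℕ, (⇑D)^[n] b = 0) :
    (∀ b : B, IsIntegral (D.kerSubring) b → D b = 0) ∧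
    (∀ (b : B) (n : ℕ), 1 ≤ n → D (b ^ n) = 0 → D b = 0) := by
  haveI : CharZero B := charZero_of_injective_algebraMap (algebraMap K B).injective
  haveI : CharZero (D.kerSubring) := inferInstance
  have hsmul : ∀ (a : D.kerSubring) (x : B), a • x = (a : B) * x := fun a x => by
    rw [Algebra.smul_def]; rfl
  let D' : Derivation (D.kerSubring) B B :=
  { toFun := D
    map_add' := D.map_add
    map_smul' := fun a x => by
      have ha : D (a : B) = 0 := a.2
      simp only [RingHom.id_apply, hsmul, D.leibniz, smul_eq_mul, ha, mul_zero, add_zero]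
    map_one_eq_zero' := D.map_one_eq_zero'
    leibniz' := D.leibniz' }
  have hD' : ∀ x : B, D' x = D x := fun _ => rfl
  have key : ∀ (b : B), IsIntegral (D.kerSubring) b → D b = 0 := by
    intro b hb
    obtain ⟨p, hpm, hpe⟩ := hb
    -- induction on degree bound
    have main : ∀ (n : ℕ) (p : Polynomial (D.kerSubring)), p.Monic → p.natDegree ≤ n →
        Polynomial.aeval b p = 0 → D b = 0 := by
      intro n
      induction n with
      | zero =>
        intro p hm hdeg he
        have : p = 1 := hm.natDegree_eq_zero.mp (Nat.le_zero.mp hdeg)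
        rw [this] at he
        simp at he
      | succ n ih =>
        intro p hm hdeg he
        by_cases hDb : D b = 0
        · exact hDb
        · -- derivative vanishes at b
          have h0 : D (Polynomial.aeval b p) = 0 := by rw [he]; exact D.map_zero
          have h1 : Polynomial.aeval b (Polynomial.derivative p) * D b = 0 := by
            have := Derivation.map_aeval D' p b
            rw [hD', hD', he, map_zero, smul_eq_mul] at this
            exact this.symm
          have h2 : Polynomial.aeval b (Polynomial.derivative p) = 0 :=
            (mul_eq_zero.mp h1).resolve_right hDb
          -- p has positive degree
          have hm0 : p.natDegree ≠ 0 := by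
            intro h
            have : p = 1 := hm.natDegree_eq_zero.mp h
            rw [this] at he; simp at he
          set m := p.natDegree with hmdef
          -- the inverse of m in the kernel
          have hinv_mem : algebraMap K B ((m : K)⁻¹) ∈ D.kerSubring := D.map_algebraMap _
          set u : D.kerSubring := ⟨algebraMap K B ((m : K)⁻¹), hinv_mem⟩ with hu
          have hum : u * (m : D.kerSubring) = 1 := by
            apply Subtype.ext
            push_cast [hu]
            rw [← map_natCast (algebraMap K B) m, ← map_mul,
              inv_mul_cancel₀ (Nat.cast_ne_zero.mpr hm0), map_one]
          set q := Polynomial.C u * Polynomial.derivative p with hq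
          have hqdeg : q.natDegree ≤ m - 1 := by
            refine le_trans (Polynomial.natDegree_mul_le) ?_
            simp [Polynomial.natDegree_C]
            omega
          have hqcoeff : q.coeff (m - 1) = 1 := by
            rw [hq, Polynomial.coeff_C_mul, Polynomial.coeff_derivative]
            have hm1 : m - 1 + 1 = m := Nat.succ_pred_eq_of_ne_zero hm0
            rw [hm1]
            have : p.coeff m = 1 := hm
            rw [this, one_mul]
            have h3 : ((m - 1 : ℕ) : D.kerSubring) + 1 = (m : D.kerSubring) := by
              norm_cast
            rw [h3, hum]
          have hqmonic : q.Monic := Polynomial.monic_of_natDegree_le_of_coeff_eq_one _ hqdeg hqcoeff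
          have hqe : Polynomial.aeval b q = 0 := by
            rw [hq, map_mul, h2, mul_zero]
          exact ih q hqmonic (le_trans hqdeg (by omega)) hqe
    exact main p.natDegree p hpm le_rfl hpe
  constructor
  · exact key
  · intro b n hn hbn
    rw [D.leibniz_pow] at hbn
    have hnB : (n : B) ≠ 0 := Nat.cast_ne_zero.mpr (by omega)
    rw [nsmul_eq_mul, smul_eq_mul] at hbn
    rcases mul_eq_zero.mp hbn with h | h
    · exact absurd h hnB
    · rcases mul_eq_zero.mp h with h' | h'
      · rcases eq_or_lt_of_le hn with h1 | h1
        · rw [← h1] at h'; simp at h'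
        · have : b = 0 := pow_eq_zero_iff (by omega : n - 1 ≠ 0) |>.mp h'
          rw [this, map_zero]
      · exact h'
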